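/- arXiv:2309.00605 — 2 statements merged into one kernel-verified Lean document; each statement's English description precedes it below -/
import Mathlib

section
/- Under the setting of the projection-free tangent-plane update (m^{i+1} = m^i + k v^i, m^i · v^i = 0, |m⁰| = 1), for all j the projection error satisfies |m^j - m^j/|m^j|| ≤ (k²/2) Σ_{i=0}^{j-1} |v^i|². -/
open scoped RealInnerProductSpace

theorem stmt8 (N : ℕ) (k : ℝ) (hk : 0 < k)
    (m v : ℕ → EuclideanSpace ℝ (Fin 3))
    (hm0 : ‖m 0‖ = 1)
    (hupd : ∀ i < N, m (i + 1) = m i + k • v i)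
    (horth : ∀ i < N, ⟪m i, v i⟫ = 0) :
    ∀ j ≤ N, ‖m j - ‖m j‖⁻¹ • m j‖ ≤
      (k ^ 2 / 2) * ∑ i ∈ Finset.range j, ‖v i‖ ^ 2 := by
  have key : ∀ j ≤ N, ‖m j‖ ^ 2 = 1 + k ^ 2 * ∑ i ∈ Finset.range j, ‖v i‖ ^ 2 := by
    intro j
    induction j with
    | zero => intro _; simp [hm0]
    | succ n ih =>
      intro hn
      have hnN : n < N := hn
      have h1 := ih (le_of_lt hnN)
      rw [hupd n hnN, Finset.sum_range_succ]
      have horth' : ⟪m n, k • v n⟫ = 0 := by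
        rw [real_inner_smul_right, horth n hnN]; ring
      have := norm_add_sq_real (m n) (k • v n)
      rw [horth'] at this
      rw [this, h1, norm_smul]
      simp [abs_of_pos hk, mul_pow]
      ring
  intro j hj
  have hsq := key j hj
  have hsum : 0 ≤ ∑ i ∈ Finset.range j, ‖v i‖ ^ 2 :=
    Finset.sum_nonneg fun i _ => sq_nonneg _
  have hge : 1 ≤ ‖m j‖ := by
    nlinarith [norm_nonneg (m j), sq_nonneg k]
  have hne : ‖m j‖ ≠ 0 := by linarith
  have heq : m j - ‖m j‖⁻¹ • m j = (1 - ‖m j‖⁻¹) • m j := by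
    rw [sub_smul, one_smul]
  rw [heq, norm_smul, Real.norm_eq_abs,
    abs_of_nonneg (by
      have : ‖m j‖⁻¹ ≤ 1 := by
        rw [inv_le_one₀ (by linarith)]; exact hge
      linarith)]
  have : (1 - ‖m j‖⁻¹) * ‖m j‖ = ‖m j‖ - 1 := by
    field_simp
  rw [this]
  nlinarith [sq_nonneg (‖m j‖ - 1)]
end

section
/- For fixed unit vector m ∈ ℝ³, α > 0, and v, h ∈ ℝ³ with m · v = 0: if α v + m × v = h - (h · m) m, then v = -m × h + α m × v. (Converse direction of the LLG reformulation.) -/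
theorem stmt18 (m v h : Fin 3 → ℝ) (α : ℝ) (hα : 0 < α)
    (hm : dotProduct m m = 1)
    (hmv : dotProduct m v = 0)
    (heq : α • v + crossProduct m v = h - (dotProduct h m) • m) :
    v = -(crossProduct m h) + α • crossProduct m v := by
  simp only [dotProduct, Fin.sum_univ_three] at hm hmv
  have h0 := congrFun heq 0
  have h1 := congrFun heq 1
  have h2 := congrFun heq 2
  simp [crossProduct, dotProduct, Fin.sum_univ_three] at h0 h1 h2
  funext i
  fin_cases i <;> simp [crossProduct, dotProduct, Fin.sum_univ_three]
  · linear_combination m 2 * h1 - m 1 * h2 - v 0 * hm + m 0 * hmv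
  · linear_combination m 0 * h2 - m 2 * h0 - v 1 * hm + m 1 * hmv
  · linear_combination m 1 * h0 - m 0 * h1 - v 2 * hm + m 2 * hmv
end
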